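/- Let e(n) denote the number of words of length n over {0,1,2} containing no palindromic factor of length greater than 2. Then e(n) = 6·F(n+1) for all n ≥ 3, where F denotes the Fibonacci sequence with F(0) = 0, F(1) = 1. -/
import Mathlib

def IsFactor {α : Type*} (y x : List α) : Prop := ∃ u v, x = u ++ y ++ v

def IsPal {α : Type*} (y : List α) : Prop := y.reverse = y

lemma factor_refl {α : Type*} (y : List α) : IsFactor y y := ⟨[], [], by simp⟩

lemma factor_trans {α : Type*} {x y z : List α} (h1 : IsFactor x y) (h2 : IsFactor y z) :
    IsFactor x z := by
  obtain ⟨u, v, rfl⟩ := h1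
  obtain ⟨u', v', rfl⟩ := h2
  exact ⟨u' ++ u, v ++ v', by simp⟩

lemma pal_peel {α : Type*} {w : List α} (h : IsPal w) (h2 : 2 ≤ w.length) :
    ∃ a s, w = a :: (s ++ [a]) ∧ IsPal s := by
  rcases w with _ | ⟨a, t⟩
  · simp at h2
  rcases t.eq_nil_or_concat with rfl | ⟨s, b, rfl⟩
  · simp at h2
  obtain ⟨hba, hs⟩ : b = a ∧ s.reverse ++ [a] = s ++ [b] := by
    simpa [IsPal, List.concat_eq_append] using h
  subst hba
  refine ⟨b, s, by simp [List.concat_eq_append], ?_⟩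
  exact List.append_cancel_right hs

lemma pal_shrink_aux {α : Type*} : ∀ N (w : List α), w.length ≤ N → IsPal w → 3 ≤ w.length →
    ∃ u, IsFactor u w ∧ IsPal u ∧ (u.length = 3 ∨ u.length = 4) := by
  intro N
  induction N with
  | zero => intro w hw _ h3; omega
  | succ N ih =>
    intro w hw hp h3
    by_cases hle : w.length ≤ 4
    · exact ⟨w, factor_refl w, hp, by omega⟩
    · obtain ⟨a, s, rfl, hs⟩ := pal_peel hp (by omega)
      have hlen : s.length + 2 = (a :: (s ++ [a])).length := by simp
      obtain ⟨u, hf, hup, hul⟩ := ih s (by omega) hs (by omega)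
      exact ⟨u, factor_trans hf ⟨[a], [a], by simp⟩, hup, hul⟩

def P3 (w : List (Fin 3)) : Prop := ∀ u v (a b c : Fin 3), w = u ++ [a,b,c] ++ v → a ≠ c

def P4 (w : List (Fin 3)) : Prop := ∀ u v (a b : Fin 3), w = u ++ [a,b,b,a] ++ v → False

def Good (w : List (Fin 3)) : Prop := P3 w ∧ P4 w

lemma noPal_iff_good (w : List (Fin 3)) :
    (∀ u, IsFactor u w → IsPal u → u.length ≤ 2) ↔ Good w := by
  constructor
  · intro h
    constructor
    · rintro u v a b c rfl hac
      subst hac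
      have := h [a,b,a] ⟨u, v, rfl⟩ (by simp [IsPal])
      simp at this
    · rintro u v a b rfl
      have := h [a,b,b,a] ⟨u, v, rfl⟩ (by simp [IsPal])
      simp at this
  · rintro ⟨h3, h4⟩ u hf hp
    by_contra hlen
    obtain ⟨u', hf', hp', hl'⟩ := pal_shrink_aux u.length u le_rfl hp (by omega)
    have hfw : IsFactor u' w := factor_trans hf' hf
    obtain ⟨s, t, rfl⟩ := hfw
    rcases hl' with h3' | h4'
    · obtain ⟨a, b, c, rfl⟩ : ∃ a b c, u' = [a, b, c] := by
        rcases u' with _|⟨a,_|⟨b,_|⟨c,_|⟨d,r⟩⟩⟩⟩ <;> simp_all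
      have : c = a := by
        have := hp'; simp [IsPal] at this; tauto
      exact h3 s t a b c (by simp) (this ▸ rfl)
    · obtain ⟨a, b, c, d, rfl⟩ : ∃ a b c d, u' = [a, b, c, d] := by
        rcases u' with _|⟨a,_|⟨b,_|⟨c,_|⟨d,_|⟨e,r⟩⟩⟩⟩⟩ <;> simp_all
      obtain ⟨hda, hcb⟩ : d = a ∧ c = b := by
        have h := hp'
        simp only [IsPal, List.reverse_cons, List.reverse_nil] at h
        simp at h
        tauto
      exact h4 s t a b (by rw [hda, hcb])

def Cc (a : Fin 3) (w : List (Fin 3)) : Prop :=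
  (∀ b c r, w = b :: c :: r → a ≠ c) ∧
  (∀ b c d r, w = b :: c :: d :: r → ¬(b = c ∧ a = d))

lemma good_short {w : List (Fin 3)} (h : w.length ≤ 2) : Good w := by
  constructor
  · rintro u v a b c rfl
    simp at h; omega
  · rintro u v a b rfl
    simp at h; omega

lemma good_cons (a : Fin 3) (w : List (Fin 3)) : Good (a :: w) ↔ Good w ∧ Cc a w := by
  constructor
  · rintro ⟨h3, h4⟩
    refine ⟨⟨?_, ?_⟩, ?_, ?_⟩
    · rintro u v x y z rfl
      exact h3 (a :: u) v x y z rfl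
    · rintro u v x y rfl
      exact h4 (a :: u) v x y rfl
    · rintro b c r rfl
      exact h3 [] r a b c rfl
    · rintro b c d r rfl ⟨hbc, had⟩
      subst hbc; subst had
      exact h4 [] r a b rfl
  · rintro ⟨⟨h3, h4⟩, hc1, hc2⟩
    constructor
    · rintro u v x y z hw
      rcases u with _ | ⟨a', u⟩
      · simp at hw
        obtain ⟨rfl, rfl⟩ := hw
        exact hc1 y z v rfl
      · simp at hw
        exact h3 u v x y z (by simp [hw.2])
    · rintro u v x y hw
      rcases u with _ | ⟨a', u⟩
      · simp at hw
        exact hc2 y y x v hw.2 ⟨rfl, hw.1⟩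
      · simp at hw
        exact h4 u v x y (by simp [hw.2])

def g : List (Fin 3) → Bool
  | a :: b :: c :: d :: t =>
      (decide (a ≠ c)) && (decide (¬(b = c ∧ a = d))) && g (b :: c :: d :: t)
  | [a, _, c] => decide (a ≠ c)
  | _ => true

lemma good_iff_g : ∀ w : List (Fin 3), Good w ↔ g w = true := by
  intro w
  induction w with
  | nil => simp [g, good_short]
  | cons a w ih =>
    rw [good_cons]
    rcases w with _ | ⟨b, _ | ⟨c, _ | ⟨d, t⟩⟩⟩
    · simp [g, good_short, Cc]
    · simp [g, good_short, Cc]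
    · -- w = [b, c]
      simp only [g, good_short (by simp : ([b,c] : List (Fin 3)).length ≤ 2), true_and]
      constructor
      · rintro ⟨h1, _⟩
        simpa using h1 b c [] rfl
      · intro h
        refine ⟨?_, ?_⟩
        · rintro b' c' r' heq
          obtain ⟨rfl, rfl, rfl⟩ : b = b' ∧ c = c' ∧ r' = [] := by simpa using heq
          simpa using h
        · rintro b' c' d' r' heq
          simp at heq
    · -- w = b :: c :: d :: t
      rw [ih]
      show _ ↔ ((decide (a ≠ c)) && (decide (¬(b = c ∧ a = d))) && g (b :: c :: d :: t)) = true
      simp only [Bool.and_eq_true, decide_eq_true_eq]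
      constructor
      · rintro ⟨hg, hc1, hc2⟩
        exact ⟨⟨hc1 b c (d :: t) rfl, hc2 b c d t rfl⟩, hg⟩
      · rintro ⟨⟨h1, h2⟩, hg⟩
        refine ⟨hg, ?_, ?_⟩
        · rintro b' c' r' heq
          obtain ⟨rfl, rfl, _⟩ : b = b' ∧ c = c' ∧ d :: t = r' := by simpa using heq
          exact h1
        · rintro b' c' d' r' heq
          obtain ⟨rfl, rfl, rfl, _⟩ : b = b' ∧ c = c' ∧ d = d' ∧ t = r' := by simpa using heq
          exact h2

def W : ℕ → Finset (List (Fin 3))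
  | 0 => {[]}
  | n + 1 => (Finset.univ ×ˢ W n).image fun p => p.1 :: p.2

lemma mem_W : ∀ n (w : List (Fin 3)), w ∈ W n ↔ w.length = n := by
  intro n
  induction n with
  | zero => intro w; simp [W, List.length_eq_zero_iff]
  | succ n ih =>
    intro w
    rcases w with _ | ⟨a, w⟩
    · simp [W]
    · simp [W, ih]

def Sf (n : ℕ) : Finset (List (Fin 3)) := (W n).filter fun w => g w = true

def hd2 : List (Fin 3) → Bool
  | a :: b :: _ => decide (a ≠ b)
  | _ => false

def Nf (n : ℕ) : Finset (List (Fin 3)) := (Sf n).filter fun w => hd2 w = true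

def Df (n : ℕ) : Finset (List (Fin 3)) := (Sf n).filter fun w => ¬(hd2 w = true)

lemma mem_Sf {n : ℕ} {w : List (Fin 3)} : w ∈ Sf n ↔ w.length = n ∧ Good w := by
  simp [Sf, mem_W, good_iff_g]

lemma card_split (n : ℕ) : (Sf n).card = (Nf n).card + (Df n).card :=
  (Finset.card_filter_add_card_filter_not (s := Sf n)
    (p := fun w => hd2 w = true) ).symm

def oth (x y : Fin 3) : Fin 3 := -(x + y)

lemma oth_spec : ∀ x y : Fin 3, x ≠ y → oth x y ≠ x ∧ oth x y ≠ y := by decide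

lemma fin3_unique : ∀ a a' b c : Fin 3, b ≠ c → a ≠ b → a ≠ c → a' ≠ b → a' ≠ c → a = a' := by
  decide

lemma mem_Nf {n : ℕ} {w : List (Fin 3)} : w ∈ Nf n ↔ w ∈ Sf n ∧ hd2 w = true := by
  simp [Nf]

lemma mem_Df {n : ℕ} {w : List (Fin 3)} : w ∈ Df n ↔ w ∈ Sf n ∧ ¬(hd2 w = true) := by
  simp [Df]

lemma good_first_ne {b c d : Fin 3} {r : List (Fin 3)} (h : Good (b :: c :: d :: r)) :
    b ≠ d := h.1 [] r b c d rfl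

lemma card_N_succ {n : ℕ} (hn : 3 ≤ n) : (Nf (n + 1)).card = (Sf n).card := by
  apply Finset.card_bij (fun w _ => w.tail)
  · intro w hw
    rw [mem_Nf] at hw
    obtain ⟨hs, _⟩ := hw
    rw [mem_Sf] at hs ⊢
    obtain ⟨hlen, hg⟩ := hs
    rcases w with _ | ⟨a, w⟩
    · simp at hlen
    · rw [good_cons] at hg
      exact ⟨by simpa using hlen, hg.1⟩
  · intro w1 h1 w2 h2 htail
    rw [mem_Nf, mem_Sf] at h1 h2
    rcases w1 with _ | ⟨a1, t1⟩
    · simp at h1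
    rcases w2 with _ | ⟨a2, t2⟩
    · simp at h2
    simp only [List.tail_cons] at htail
    subst htail
    obtain ⟨⟨hl1, hg1⟩, hh1⟩ := h1
    obtain ⟨⟨_, hg2⟩, hh2⟩ := h2
    rcases t1 with _ | ⟨b, _ | ⟨c, _ | ⟨d, r⟩⟩⟩
    · simp at hl1; omega
    · simp at hl1; omega
    · simp at hl1; omega
    rw [good_cons] at hg1 hg2
    obtain ⟨hgt, hc1, hc2⟩ := hg1
    obtain ⟨-, hc1', hc2'⟩ := hg2
    have hbd : b ≠ d := good_first_ne hgt
    have h1b : a1 ≠ b := by simpa [hd2] using hh1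
    have h2b : a2 ≠ b := by simpa [hd2] using hh2
    have h1c : a1 ≠ c := hc1 b c (d :: r) rfl
    have h2c : a2 ≠ c := hc1' b c (d :: r) rfl
    by_cases hbc : b = c
    · have h1d : a1 ≠ d := fun h => hc2 b c d r rfl ⟨hbc, h⟩
      have h2d : a2 ≠ d := fun h => hc2' b c d r rfl ⟨hbc, h⟩
      simp only [List.cons.injEq, and_true]
      exact fin3_unique a1 a2 b d hbd h1b h1d h2b h2d
    · simp only [List.cons.injEq, and_true]
      exact fin3_unique a1 a2 b c hbc h1b h1c h2b h2c
  · intro w hw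
    rw [mem_Sf] at hw
    obtain ⟨hlen, hg⟩ := hw
    rcases w with _ | ⟨b, _ | ⟨c, _ | ⟨d, r⟩⟩⟩
    · simp at hlen; omega
    · simp at hlen; omega
    · simp at hlen; omega
    set a : Fin 3 := if b = c then oth b d else oth b c with ha
    have hbd : b ≠ d := good_first_ne hg
    have hab : a ≠ b := by
      by_cases hbc : b = c
      · simp only [ha, if_pos hbc]; exact (oth_spec b d hbd).1
      · simp only [ha, if_neg hbc]; exact (oth_spec b c hbc).1
    have hac : a ≠ c := by
      by_cases hbc : b = c
      · simp only [ha, if_pos hbc]; exact hbc ▸ (oth_spec b d hbd).1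
      · simp only [ha, if_neg hbc]; exact (oth_spec b c hbc).2
    have had : b = c → a ≠ d := by
      intro hbc
      simp only [ha, if_pos hbc]; exact (oth_spec b d hbd).2
    refine ⟨a :: b :: c :: d :: r, ?_, rfl⟩
    rw [mem_Nf, mem_Sf, good_cons]
    refine ⟨⟨by simpa using hlen, hg, ?_, ?_⟩, by simpa [hd2] using hab⟩
    · rintro b' c' r' heq
      obtain ⟨rfl, rfl, -⟩ : b = b' ∧ c = c' ∧ (d :: r) = r' := by simpa using heq
      exact hac
    · rintro b' c' d' r' heq hcontra
      obtain ⟨rfl, rfl, rfl, -⟩ : b = b' ∧ c = c' ∧ d = d' ∧ r = r' := by simpa using heq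
      exact had hcontra.1 hcontra.2

lemma card_D_succ {n : ℕ} (hn : 3 ≤ n) : (Df (n + 1)).card = (Nf n).card := by
  apply Finset.card_bij' (fun w _ => w.tail) (fun w _ => w.headI :: w)
  case hi =>
    intro w hw
    rw [mem_Df, mem_Sf] at hw
    obtain ⟨⟨hlen, hg⟩, hh⟩ := hw
    rcases w with _ | ⟨a, _ | ⟨b, _ | ⟨c, r⟩⟩⟩
    · simp at hlen
    · simp at hlen; omega
    · simp at hlen; omega
    have hab : a = b := by
      by_contra hne
      exact hh (by simpa [hd2] using hne)
    subst hab
    rw [good_cons] at hg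
    obtain ⟨hgt, hc1, -⟩ := hg
    have hac : a ≠ c := hc1 a c r rfl
    rw [mem_Nf, mem_Sf]
    exact ⟨⟨by simpa using hlen, hgt⟩, by simpa [hd2] using hac⟩
  case hj =>
    intro w hw
    rw [mem_Nf, mem_Sf] at hw
    obtain ⟨⟨hlen, hg⟩, hh⟩ := hw
    rcases w with _ | ⟨b, _ | ⟨c, _ | ⟨d, r⟩⟩⟩
    · simp at hlen; omega
    · simp at hlen; omega
    · simp at hlen; omega
    have hbc : b ≠ c := by simpa [hd2] using hh
    rw [mem_Df, mem_Sf, good_cons]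
    simp only [List.headI]
    refine ⟨⟨by simpa using hlen, hg, ?_, ?_⟩, by simp [hd2]⟩
    · rintro b' c' r' heq
      obtain ⟨rfl, rfl, -⟩ : b = b' ∧ c = c' ∧ (d :: r) = r' := by simpa using heq
      exact hbc
    · rintro b' c' d' r' heq hcontra
      obtain ⟨rfl, rfl, rfl, -⟩ : b = b' ∧ c = c' ∧ d = d' ∧ r = r' := by simpa using heq
      exact hbc hcontra.1
  case left_inv =>
    intro w hw
    rw [mem_Df, mem_Sf] at hw
    obtain ⟨⟨hlen, -⟩, hh⟩ := hw
    rcases w with _ | ⟨a, _ | ⟨b, r⟩⟩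
    · simp at hlen
    · simp at hlen; omega
    have hab : a = b := by
      by_contra hne
      exact hh (by simpa [hd2] using hne)
    subst hab
    rfl
  case right_inv =>
    intro w hw
    rfl

lemma Sf3 : (Sf 3).card = 18 := by decide
lemma Nf3 : (Nf 3).card = 12 := by decide

lemma card_rec {n : ℕ} (hn : 3 ≤ n) :
    (Sf (n + 1)).card = (Sf n).card + (Nf n).card := by
  rw [card_split (n + 1), card_N_succ hn, card_D_succ hn, Nat.add_comm]

lemma main_rec : ∀ k, (Sf (k + 3)).card = 6 * Nat.fib (k + 4) ∧
    (Nf (k + 3)).card = 6 * Nat.fib (k + 3) := by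
  intro k
  induction k with
  | zero =>
    refine ⟨?_, ?_⟩
    · rw [Sf3]; decide
    · rw [Nf3]; decide
  | succ k ih =>
    obtain ⟨hS, hN⟩ := ih
    have hN' : (Nf (k + 4)).card = (Sf (k + 3)).card := card_N_succ (by omega)
    have hS' : (Sf (k + 4)).card = (Sf (k + 3)).card + (Nf (k + 3)).card :=
      card_rec (by omega)
    constructor
    · have hfib : Nat.fib (k + 5) = Nat.fib (k + 4) + Nat.fib (k + 3) := by
        have h := Nat.fib_add_two (n := k + 3)
        exact h.trans (Nat.add_comm _ _)
      show (Sf (k + 4)).card = 6 * Nat.fib (k + 5)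
      rw [hS', hS, hN, hfib]
      ring
    · rw [show k + 1 + 3 = k + 4 from rfl, hN', hS]
/-- The number of ternary words of length `n` with no palindromic factor of length
greater than 2 equals `6·F(n+1)` for `n ≥ 3`, where `F` is the Fibonacci sequence. -/
theorem count_ternary_no_long_palindrome (n : ℕ) (hn : 3 ≤ n) :
    {w : List (Fin 3) | w.length = n ∧
      ∀ u, IsFactor u w → IsPal u → u.length ≤ 2}.ncard = 6 * Nat.fib (n + 1) := by
  have hset : {w : List (Fin 3) | w.length = n ∧
      ∀ u, IsFactor u w → IsPal u → u.length ≤ 2} = ↑(Sf n) := by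
    ext w
    simp only [Set.mem_setOf_eq, Finset.coe_filter, mem_Sf, Finset.mem_coe]
    rw [noPal_iff_good]
  rw [hset, Set.ncard_coe_finset]
  obtain ⟨k, rfl⟩ : ∃ k, n = k + 3 := ⟨n - 3, by omega⟩
  exact (main_rec k).1
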